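/- Let X be a set, f : X → X a bijection, λ > 1, and h : X → ℝ a nonnegative function satisfying h(f(x)) + h(f⁻¹(x)) = (λ + λ⁻¹)h(x) for all x. If x ∈ X is f-periodic (fⁿ(x) = x for some n ≥ 1), then h(x) = 0. -/

import Mathlib

/-- Let `f : X → X` be a bijection, `λ > 1`, and `h : X → ℝ` a nonnegative function with
`h(f x) + h(f⁻¹ x) = (λ + λ⁻¹) h(x)` for all `x`. If `x` is `f`-periodic (`fⁿ x = x` for
some `n ≥ 1`), then `h(x) = 0`. -/
theorem canonical_height_eq_zero_of_periodic {X : Type*} (f : X ≃ X) (l : ℝ) (hl : 1 < l)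
    (h : X → ℝ) (hnn : ∀ x, 0 ≤ h x)
    (hfe : ∀ x, h (f x) + h (f.symm x) = (l + l⁻¹) * h x)
    (x : X) (hper : ∃ n : ℕ, 1 ≤ n ∧ (f ^ n) x = x) :
    h x = 0 := by
  obtain ⟨n, hn1, hnx⟩ := hper
  have hl0 : l ≠ 0 := by positivity
  have key : ∀ m : ℕ,
      (h ((f ^ m) x) + h ((f.symm ^ m) x) = (l ^ m + l⁻¹ ^ m) * h x) ∧
      (h ((f ^ (m+1)) x) + h ((f.symm ^ (m+1)) x) = (l ^ (m+1) + l⁻¹ ^ (m+1)) * h x) := by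
    intro m
    induction m with
    | zero =>
      constructor
      · simp; ring
      · simpa using hfe x
    | succ m ih =>
      obtain ⟨ih0, ih1⟩ := ih
      refine ⟨ih1, ?_⟩
      have e1 : (f ^ (m+2)) x = f ((f ^ (m+1)) x) := by
        rw [pow_succ' f (m+1)]; rfl
      have e2 : f.symm ((f ^ (m+1)) x) = (f ^ m) x := by
        have : (f ^ (m+1)) x = f ((f ^ m) x) := by rw [pow_succ' f m]; rfl
        rw [this, Equiv.symm_apply_apply]
      have e3 : (f.symm ^ (m+2)) x = f.symm ((f.symm ^ (m+1)) x) := by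
        rw [pow_succ' f.symm (m+1)]; rfl
      have e4 : f ((f.symm ^ (m+1)) x) = (f.symm ^ m) x := by
        have : (f.symm ^ (m+1)) x = f.symm ((f.symm ^ m) x) := by
          rw [pow_succ' f.symm m]; rfl
        rw [this, Equiv.apply_symm_apply]
      have r1 := hfe ((f ^ (m+1)) x)
      have r2 := hfe ((f.symm ^ (m+1)) x)
      rw [← e1, e2] at r1
      rw [e4, ← e3] at r2
      have lrec : l ^ (m+2) + l⁻¹ ^ (m+2)
          = (l + l⁻¹) * (l ^ (m+1) + l⁻¹ ^ (m+1)) - (l ^ m + l⁻¹ ^ m) := by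
        field_simp
        linear_combination (l⁻¹ * l⁻¹ ^ m - l * l⁻¹ ^ m) * mul_inv_cancel₀ hl0
      rw [lrec]
      linear_combination r1 + r2 + (l + l⁻¹) * ih1 - ih0
  have hs : h ((f ^ n) x) + h ((f.symm ^ n) x) = (l ^ n + l⁻¹ ^ n) * h x := (key n).1
  have hsymm : (f.symm ^ n) x = x := by
    have : f.symm ^ n = (f ^ n).symm := by
      simp [← Equiv.Perm.inv_def, inv_pow]
    rw [this]
    exact (Equiv.symm_apply_eq _).mpr hnx.symm
  rw [hnx, hsymm] at hs
  have hln : 1 < l ^ n := one_lt_pow₀ hl (by omega)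
  have hgt : 2 < l ^ n + l⁻¹ ^ n := by
    rw [inv_pow]
    have hpos : 0 < l ^ n := by positivity
    have hi : 0 < (l ^ n)⁻¹ := by positivity
    have hsq : 0 < (l ^ n - 1) ^ 2 := by nlinarith
    nlinarith [mul_inv_cancel₀ (ne_of_gt hpos), mul_pos hi hsq]
  nlinarith [hnn x, hs]
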